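/- arXiv:1109.6077 — 7 statements merged into one kernel-verified Lean document; each statement's English description precedes it below -/
import Mathlib

section
/- For any state φ on a C*-algebra A, the set φ¹₊ = {a ∈ A : 0 ≤ a, ‖a‖ ≤ 1, φ(a) = 1} is norm centred: for any finite list a₁,…,aₙ of elements of φ¹₊, ‖a₁⋯aₙ‖ = 1. -/
open scoped ComplexOrder

private lemma conj_polar {z w : ℂ} (h1 : (z + w).im = 0)
    (h2 : (Complex.I * w - Complex.I * z).im = 0) : w = (starRingEnd ℂ) z := by
  apply Complex.ext <;>
    simp only [Complex.add_im, Complex.sub_im, Complex.mul_im, Complex.I_re, Complex.I_im,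
      Complex.conj_re, Complex.conj_im, zero_mul, one_mul, zero_add, add_zero] at * <;>
    linarith

section Aux

variable {A : Type*} [NormedRing A] [StarRing A] [CStarRing A]
    [NormedAlgebra ℂ A] [CompleteSpace A] [StarModule ℂ A]
    [PartialOrder A] [StarOrderedRing A]
    (φ : A →L[ℂ] ℂ)

private lemma im_diag (hφpos : ∀ x : A, 0 ≤ x → 0 ≤ φ x) (c : A) :
    (φ (star c * c)).im = 0 := by
  have h := hφpos _ (star_mul_self_nonneg c)
  rw [Complex.le_def] at h
  simpa using h.2.symm

private lemma key_sum (hφpos : ∀ x : A, 0 ≤ x → 0 ≤ φ x) (c d : A) :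
    (φ (star c * d) + φ (star d * c)).im = 0 := by
  have h := im_diag φ hφpos (c + d)
  have e : star (c + d) * (c + d) = star c * c + (star c * d + star d * c) + star d * d := by
    rw [star_add]; noncomm_ring
  rw [e, map_add, map_add, map_add] at h
  simp only [Complex.add_im, im_diag φ hφpos c, im_diag φ hφpos d, zero_add, add_zero] at h
  simpa [Complex.add_im] using h

private lemma φ_conj_symm (hφpos : ∀ x : A, 0 ≤ x → 0 ≤ φ x) (x y : A) :
    (starRingEnd ℂ) (φ (star y * x)) = φ (star x * y) := by
  have h1 := key_sum φ hφpos y x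
  have h2 := key_sum φ hφpos x (Complex.I • y)
  rw [mul_smul_comm, star_smul, smul_mul_assoc, map_smul, map_smul] at h2
  simp only [smul_eq_mul, Complex.star_def, Complex.conj_I, neg_mul, ← sub_eq_add_neg] at h2
  exact (conj_polar h1 h2).symm

/-- The positive sesquilinear form `⟪x, y⟫ = φ (x* y)` as a `PreInnerProductSpace.Core`. -/
private noncomputable def core (hφpos : ∀ x : A, 0 ≤ x → 0 ≤ φ x) : PreInnerProductSpace.Core ℂ A where
  inner x y := φ (star x * y)
  conj_inner_symm x y := φ_conj_symm φ hφpos x y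
  re_inner_nonneg x := by
    have h := hφpos _ (star_mul_self_nonneg x)
    rw [Complex.le_def] at h
    simpa using h.1
  add_left x y z := by
    show φ (star (x + y) * z) = φ (star x * z) + φ (star y * z)
    rw [star_add, add_mul, map_add]
  smul_left x y r := by
    show φ (star (r • x) * y) = (starRingEnd ℂ) r * φ (star x * y)
    rw [star_smul, smul_mul_assoc, map_smul, smul_eq_mul, Complex.star_def]

private lemma cs_zero (hφpos : ∀ x : A, 0 ≤ x → 0 ≤ φ x) (x b : A)
    (hbb : φ (star b * b) = 0) : φ (star x * b) = 0 := by
  have h := InnerProductSpace.Core.inner_mul_inner_self_le (𝕜 := ℂ) (c := core φ hφpos) x b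
  have hsym := InnerProductSpace.Core.norm_inner_symm (𝕜 := ℂ) (c := core φ hφpos) x b
  have h' : ‖φ (star x * b)‖ * ‖φ (star b * x)‖
      ≤ RCLike.re (φ (star x * x)) * RCLike.re (φ (star b * b)) := h
  have hsym' : ‖φ (star x * b)‖ = ‖φ (star b * x)‖ := hsym
  rw [hbb, ← hsym'] at h'
  simp only [map_zero, mul_zero] at h'
  have : ‖φ (star x * b)‖ = 0 := by nlinarith [norm_nonneg (φ (star x * b))]
  exact norm_eq_zero.mp this

private lemma φ_star (hφpos : ∀ x : A, 0 ≤ x → 0 ≤ φ x) (x : A) :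
    φ (star x) = (starRingEnd ℂ) (φ x) := by
  have h := φ_conj_symm φ hφpos 1 x
  simp only [star_one, mul_one, one_mul] at h
  exact ((starRingEnd ℂ).injective (by simpa using h.symm)).symm

private lemma φ_mono (hφpos : ∀ x : A, 0 ≤ x → 0 ≤ φ x) {x y : A} (h : x ≤ y) :
    φ x ≤ φ y := by
  have h2 := hφpos _ (sub_nonneg.mpr h)
  rw [map_sub] at h2
  exact sub_nonneg.mp h2

private lemma φ_one (hφnorm : ‖φ‖ = 1) (hφpos : ∀ x : A, 0 ≤ x → 0 ≤ φ x) : φ 1 = 1 := by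
  letI : CStarAlgebra A := { }
  have hnt : Nontrivial A := by
    by_contra h
    rw [not_nontrivial_iff_subsingleton] at h
    have hz : φ = 0 := by ext x; rw [Subsingleton.elim x 0]; simp
    rw [hz] at hφnorm; simp at hφnorm
  have h1nn : (0 : A) ≤ 1 := by simpa using star_mul_self_nonneg (1 : A)
  have h1pos : 0 ≤ φ 1 := hφpos 1 h1nn
  rw [Complex.le_def] at h1pos
  simp only [Complex.zero_re, Complex.zero_im] at h1pos
  have him : (φ 1).im = 0 := h1pos.2.symm
  have hre_le : (φ 1).re ≤ 1 := by
    calc (φ 1).re ≤ ‖φ 1‖ := Complex.re_le_norm _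
      _ ≤ ‖φ‖ * ‖(1 : A)‖ := φ.le_opNorm 1
      _ = 1 := by rw [hφnorm, norm_one, mul_one]
  have hbound : ∀ x : A, ‖φ x‖ ≤ (φ 1).re * ‖x‖ := by
    intro x
    have hcs := InnerProductSpace.Core.inner_mul_inner_self_le (𝕜 := ℂ)
      (c := core φ hφpos) 1 x
    have hcs' : ‖φ (star (1 : A) * x)‖ * ‖φ (star x * 1)‖
        ≤ RCLike.re (φ (star (1 : A) * 1)) * RCLike.re (φ (star x * x)) := hcs
    simp only [star_one, one_mul, mul_one] at hcs'
    rw [φ_star φ hφpos x] at hcs'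
    rw [RCLike.norm_conj] at hcs'
    -- bound re (φ (star x * x)) by ‖x‖^2 * (φ 1).re
    have hle : star x * x ≤ algebraMap ℝ A ‖star x * x‖ :=
      IsSelfAdjoint.le_algebraMap_norm_self
    have hφle := φ_mono φ hφpos hle
    have halg : φ (algebraMap ℝ A ‖star x * x‖) = (‖star x * x‖ : ℂ) * φ 1 := by
      rw [Algebra.algebraMap_eq_smul_one, φ.map_smul_of_tower, Complex.real_smul]
    rw [halg, Complex.le_def] at hφle
    have hre2 : (φ (star x * x)).re ≤ ‖star x * x‖ * (φ 1).re := by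
      have := hφle.1
      rwa [Complex.re_ofReal_mul] at this
    have hre3 : (φ (star x * x)).re ≤ ‖x‖ * ‖x‖ * (φ 1).re := by
      rw [CStarRing.norm_star_mul_self] at hre2; exact hre2
    have hrc : RCLike.re (φ (star x * x)) = (φ (star x * x)).re := rfl
    have hrc0 : RCLike.re (φ (1 : A)) = (φ (1 : A)).re := rfl
    rw [hrc, hrc0] at hcs'
    have hfinal : ‖φ x‖ * ‖φ x‖ ≤ ((φ 1).re * ‖x‖) * ((φ 1).re * ‖x‖) := by
      calc ‖φ x‖ * ‖φ x‖ ≤ (φ 1).re * (φ (star x * x)).re := hcs'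
        _ ≤ (φ 1).re * (‖x‖ * ‖x‖ * (φ 1).re) :=
            mul_le_mul_of_nonneg_left hre3 h1pos.1
        _ = ((φ 1).re * ‖x‖) * ((φ 1).re * ‖x‖) := by ring
    exact nonneg_le_nonneg_of_sq_le_sq (mul_nonneg h1pos.1 (norm_nonneg x)) hfinal
  have hop : ‖φ‖ ≤ (φ 1).re := φ.opNorm_le_bound h1pos.1 hbound
  rw [hφnorm] at hop
  apply Complex.ext
  · exact le_antisymm hre_le hop
  · simpa using him

private lemma sq_le_self {b : A} (h0 : 0 ≤ b) (h1 : b ≤ 1) : b * b ≤ b := by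
  letI : CStarAlgebra A := { }
  have h := star_left_conjugate_nonneg (sub_nonneg.mpr h1) (CFC.sqrt b)
  rw [(IsSelfAdjoint.of_nonneg (CFC.sqrt_nonneg (a := b))).star_eq] at h
  have hs : CFC.sqrt b * CFC.sqrt b = b := CFC.sqrt_mul_sqrt_self b h0
  set s := CFC.sqrt b with hsdef
  rw [← hs] at h
  have e : s * (1 - s * s) * s = s * s - (s * s) * (s * s) := by noncomm_ring
  rw [e, hs] at h
  exact sub_nonneg.mp h

private lemma absorb (hφnorm : ‖φ‖ = 1) (hφpos : ∀ x : A, 0 ≤ x → 0 ≤ φ x)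
    {a : A} (h0 : 0 ≤ a) (h1 : ‖a‖ ≤ 1) (ha : φ a = 1) (x : A) : φ (x * a) = φ x := by
  letI : CStarAlgebra A := { }
  set b := 1 - a with hbdef
  have hb0 : 0 ≤ b := sub_nonneg.mpr ((CStarAlgebra.norm_le_one_iff_of_nonneg a).mp h1)
  have hb1 : b ≤ 1 := by
    rw [hbdef]
    calc 1 - a ≤ 1 - 0 := by exact sub_le_sub_left h0 1
      _ = 1 := sub_zero 1
  have hφb : φ b = 0 := by
    rw [hbdef, map_sub, φ_one φ hφnorm hφpos, ha, sub_self]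
  have hbsa : star b = b := (IsSelfAdjoint.of_nonneg hb0).star_eq
  have hbb : φ (b * b) = 0 := by
    refine le_antisymm ?_ ?_
    · calc φ (b * b) ≤ φ b := φ_mono φ hφpos (sq_le_self hb0 hb1)
        _ = 0 := hφb
    · have := hφpos _ (star_mul_self_nonneg b)
      rwa [hbsa] at this
  have hxb : φ (x * b) = 0 := by
    have h := cs_zero φ hφpos (star x) b (by rwa [hbsa])
    rwa [star_star] at h
  have : x * a = x - x * b := by rw [hbdef]; noncomm_ring
  rw [this, map_sub, hxb, sub_zero]

private lemma φ_prod (hφnorm : ‖φ‖ = 1) (hφpos : ∀ x : A, 0 ≤ x → 0 ≤ φ x)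
    (l : List A) (hl : ∀ x ∈ l, 0 ≤ x ∧ ‖x‖ ≤ 1 ∧ φ x = 1) : φ l.prod = 1 := by
  induction l using List.reverseRecOn with
  | nil => simpa using φ_one φ hφnorm hφpos
  | append_singleton t a ih =>
    rw [List.prod_append, List.prod_singleton]
    obtain ⟨h0, h1, ha⟩ := hl a (by simp)
    rw [absorb φ hφnorm hφpos h0 h1 ha]
    exact ih fun x hx => hl x (by simp [hx])

end Aux

/-- For any state `φ` on a C*-algebra `A`, the set
`φ¹₊ = {a : 0 ≤ a, ‖a‖ ≤ 1, φ a = 1}` is norm centred: every finite product of its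
elements has norm `1`. -/
theorem stmt2 {A : Type*} [NormedRing A] [StarRing A] [CStarRing A]
    [NormedAlgebra ℂ A] [CompleteSpace A] [StarModule ℂ A]
    [PartialOrder A] [StarOrderedRing A]
    (φ : A →L[ℂ] ℂ) (hφnorm : ‖φ‖ = 1) (hφpos : ∀ x : A, 0 ≤ x → 0 ≤ φ x)
    (l : List A) (hl : ∀ x ∈ l, 0 ≤ x ∧ ‖x‖ ≤ 1 ∧ φ x = 1) :
    ‖l.prod‖ = 1 := by
  have hnt : Nontrivial A := by
    by_contra h
    rw [not_nontrivial_iff_subsingleton] at h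
    have hz : φ = 0 := by ext x; rw [Subsingleton.elim x 0]; simp
    rw [hz] at hφnorm; simp at hφnorm
  have hφ1 : φ l.prod = 1 := φ_prod φ hφnorm hφpos l hl
  have hub : ∀ m : List A, (∀ x ∈ m, ‖x‖ ≤ 1) → ‖m.prod‖ ≤ 1 := by
    intro m
    induction m with
    | nil => intro _; simp
    | cons a t ih =>
      intro h
      rw [List.prod_cons]
      calc ‖a * t.prod‖ ≤ ‖a‖ * ‖t.prod‖ := norm_mul_le _ _
        _ ≤ 1 * 1 := mul_le_mul (h a (by simp)) (ih fun x hx => h x (by simp [hx]))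
            (norm_nonneg _) zero_le_one
        _ = 1 := mul_one 1
  have hlb : 1 ≤ ‖l.prod‖ := by
    have h := φ.le_opNorm l.prod
    rw [hφnorm, one_mul] at h
    calc (1 : ℝ) = ‖φ l.prod‖ := by rw [hφ1]; simp
      _ ≤ ‖l.prod‖ := h
  exact le_antisymm (hub l fun x hx => (hl x hx).2.1) hlb
end

section
/- Let A be a C*-algebra, φ a state on A, and suppose a₁,…,aₙ ∈ A are positive elements of the unit ball with φ(aᵢ) = 1 for all i. Then for any positive b in the unit ball, φ(1−b) ≤ ‖a₁⋯aₙ(1−b)aₙ⋯a₁‖ (in the unitization of A if A is non-unital). -/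
open scoped ComplexOrder ComplexStarModule

section aux

variable {A : Type*} [NormedRing A] [StarRing A] [CStarRing A]
    [NormedAlgebra ℂ A] [CompleteSpace A] [StarModule ℂ A]
    [PartialOrder A] [StarOrderedRing A]

lemma aux_conj_of_nonneg {z : ℂ} (hz : 0 ≤ z) : (starRingEnd ℂ) z = z := by
  rw [Complex.conj_eq_iff_im]
  exact ((Complex.le_def.mp hz).2).symm

lemma aux_algebraMap_norm_nonneg (h : A) : (0 : A) ≤ algebraMap ℝ A ‖h‖ := by
  have hnn := star_mul_self_nonneg (((Real.sqrt ‖h‖ : ℝ) : ℂ) • (1 : A))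
  have heq : star (((Real.sqrt ‖h‖ : ℝ) : ℂ) • (1 : A)) * (((Real.sqrt ‖h‖ : ℝ) : ℂ) • (1 : A))
      = algebraMap ℝ A ‖h‖ := by
    rw [star_smul, star_one, smul_mul_smul_comm, one_mul, Complex.star_def, Complex.conj_ofReal,
      ← Complex.ofReal_mul, Real.mul_self_sqrt (norm_nonneg h),
      IsScalarTower.algebraMap_apply ℝ ℂ A, Algebra.algebraMap_eq_smul_one]
    norm_num
  rwa [heq] at hnn

lemma aux_conj_sa (φ : A →L[ℂ] ℂ) (hφpos : ∀ x : A, 0 ≤ x → 0 ≤ φ x)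
    {h : A} (hh : IsSelfAdjoint h) : (starRingEnd ℂ) (φ h) = φ h := by
  letI : CStarAlgebra A :=
    { toNormedRing := ‹_›, toStarRing := ‹_›, toCompleteSpace := ‹_›, toCStarRing := ‹_›,
      toNormedAlgebra := ‹_›, toStarModule := ‹_› }
  have h1 : (0 : A) ≤ h + algebraMap ℝ A ‖h‖ := by
    have h0 := hh.neg_algebraMap_norm_le_self
    have := sub_nonneg.mpr h0
    rwa [sub_neg_eq_add] at this
  have h2 : (0 : A) ≤ algebraMap ℝ A ‖h‖ := aux_algebraMap_norm_nonneg h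
  have key : h = (h + algebraMap ℝ A ‖h‖) - algebraMap ℝ A ‖h‖ := by abel
  rw [key, map_sub, map_sub, aux_conj_of_nonneg (hφpos _ h1), aux_conj_of_nonneg (hφpos _ h2)]

lemma aux_conj_star (φ : A →L[ℂ] ℂ) (hφpos : ∀ x : A, 0 ≤ x → 0 ≤ φ x)
    (x : A) : (starRingEnd ℂ) (φ x) = φ (star x) := by
  have hx := realPart_add_I_smul_imaginaryPart x
  have hR : (starRingEnd ℂ) (φ (ℜ x : A)) = φ (ℜ x : A) := aux_conj_sa φ hφpos (ℜ x).2
  have hI : (starRingEnd ℂ) (φ (ℑ x : A)) = φ (ℑ x : A) := aux_conj_sa φ hφpos (ℑ x).2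
  have hstar : star x = (ℜ x : A) - Complex.I • (ℑ x : A) := by
    conv_lhs => rw [← hx]
    rw [star_add, star_smul]
    simp [(ℜ x).2.star_eq, (ℑ x).2.star_eq, Complex.star_def, Complex.conj_I, neg_smul,
      sub_eq_add_neg]
  conv_lhs => rw [← hx]
  rw [hstar]
  simp only [map_add, map_sub, map_smul, smul_eq_mul, map_mul, Complex.conj_I, hR, hI]
  ring

/-- The GNS-style pre-inner-product associated to a positive functional. -/
noncomputable def auxCore (φ : A →L[ℂ] ℂ) (hφpos : ∀ x : A, 0 ≤ x → 0 ≤ φ x) :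
    PreInnerProductSpace.Core ℂ A where
  inner x y := φ (star x * y)
  conj_inner_symm x y := by
    rw [aux_conj_star φ hφpos, star_mul, star_star]
  re_inner_nonneg x := (Complex.le_def.mp (hφpos _ (star_mul_self_nonneg x))).1
  add_left x y z := by simp [star_add, add_mul]
  smul_left x y r := by simp [star_smul, smul_mul_assoc]

lemma aux_absorb_left (φ : A →L[ℂ] ℂ) (hφnorm : ‖φ‖ = 1)
    (hφpos : ∀ x : A, 0 ≤ x → 0 ≤ φ x)
    {a : A} (ha : 0 ≤ a) (ha1 : ‖a‖ ≤ 1) (haφ : φ a = 1) (y : A) :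
    φ (a * y) = φ y := by
  have hnt : Nontrivial A := by
    by_contra h
    rw [not_nontrivial_iff_subsingleton] at h
    have : φ = 0 := by ext x; rw [Subsingleton.elim x 0]; simp
    rw [this] at hφnorm; simp at hφnorm
  letI : CStarAlgebra A :=
    { toNormedRing := ‹_›, toStarRing := ‹_›, toCompleteSpace := ‹_›, toCStarRing := ‹_›,
      toNormedAlgebra := ‹_›, toStarModule := ‹_› }
  have ha_le : a ≤ 1 := (CStarAlgebra.norm_le_one_iff_of_nonneg a (ha := ha)).mp ha1
  set c : A := 1 - a with hc
  have hc0 : 0 ≤ c := sub_nonneg.mpr ha_le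
  have hcsa : IsSelfAdjoint c := IsSelfAdjoint.of_nonneg hc0
  have hc1 : c ≤ 1 := by simp [hc, sub_le_self_iff, ha]
  -- φ 1 = 1
  have hφ1 : φ 1 = 1 := by
    have h1 : 0 ≤ φ c := hφpos _ hc0
    have h2 : φ c = φ 1 - 1 := by rw [hc, map_sub, haφ]
    have h3 : ‖φ (1 : A)‖ ≤ 1 := by
      calc ‖φ (1 : A)‖ ≤ ‖φ‖ * ‖(1 : A)‖ := φ.le_opNorm 1
        _ = 1 := by rw [hφnorm, norm_one, mul_one]
    rw [h2] at h1
    obtain ⟨hre, him⟩ := Complex.le_def.mp h1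
    simp only [Complex.zero_re, Complex.sub_re, Complex.one_re, Complex.zero_im,
      Complex.sub_im, Complex.one_im, sub_zero] at hre him
    have h4 : (φ (1:A)).re ≤ ‖φ (1:A)‖ := Complex.re_le_norm _
    have hre1 : (φ (1:A)).re = 1 := le_antisymm (h4.trans h3) (by linarith)
    exact Complex.ext hre1 him.symm
  have hφc : φ c = 0 := by
    rw [hc, map_sub, hφ1, haφ, sub_self]
  -- φ (c * c) = 0
  have hcc : φ (c * c) = 0 := by
    have hsq : c ^ 2 ≤ c ^ 1 := CStarAlgebra.pow_antitone (ha₀ := hc0) hc1 (by norm_num)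
    have h1 : 0 ≤ φ (c * c) := by
      have := hφpos _ (star_mul_self_nonneg c)
      rwa [hcsa.star_eq] at this
    have h2 : φ (c * c) ≤ 0 := by
      have h5 := hφpos _ (sub_nonneg.mpr hsq)
      rw [map_sub, pow_one, pow_two, hφc] at h5
      obtain ⟨h5re, h5im⟩ := Complex.le_def.mp h5
      obtain ⟨h1re, h1im⟩ := Complex.le_def.mp h1
      rw [Complex.le_def]
      constructor
      · simp only [Complex.zero_re, Complex.zero_im, Complex.sub_re] at *
        linarith
      · simpa using h1im.symm
    exact le_antisymm h2 h1
  -- Cauchy–Schwarz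
  have hcy : φ (c * y) = 0 := by
    letI core : PreInnerProductSpace.Core ℂ A := auxCore φ hφpos
    have cs := InnerProductSpace.Core.inner_mul_inner_self_le (𝕜 := ℂ) (F := A) c y
    have hinner_cc : (core.inner c c : ℂ) = 0 := by
      show φ (star c * c) = 0
      rw [hcsa.star_eq, hcc]
    have hinner_cy : (core.inner c y : ℂ) = φ (c * y) := by
      show φ (star c * y) = φ (c * y)
      rw [hcsa.star_eq]
    have hsymm : ‖(core.inner y c : ℂ)‖ = ‖(core.inner c y : ℂ)‖ := by
      rw [← core.conj_inner_symm c y, RCLike.norm_conj]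
    rw [hsymm, hinner_cc, hinner_cy] at cs
    simp only [map_zero, zero_mul] at cs
    have : ‖φ (c * y)‖ = 0 := by nlinarith [norm_nonneg (φ (c * y))]
    exact norm_eq_zero.mp this
  have hay : a * y = y - c * y := by rw [hc, sub_mul, one_mul]; abel
  rw [hay, map_sub, hcy, sub_zero]

lemma aux_absorb_right (φ : A →L[ℂ] ℂ) (hφnorm : ‖φ‖ = 1)
    (hφpos : ∀ x : A, 0 ≤ x → 0 ≤ φ x)
    {a : A} (ha : 0 ≤ a) (ha1 : ‖a‖ ≤ 1) (haφ : φ a = 1) (y : A) :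
    φ (y * a) = φ y := by
  have h1 : φ (y * a) = (starRingEnd ℂ) (φ (star (y * a))) := by
    rw [← aux_conj_star φ hφpos, Complex.conj_conj]
  rw [h1, star_mul, (IsSelfAdjoint.of_nonneg ha).star_eq,
    aux_absorb_left φ hφnorm hφpos ha ha1 haφ (star y),
    ← aux_conj_star φ hφpos, Complex.conj_conj]

end aux

/-- If `φ` is a state on a unital C*-algebra `A`, `a₁, …, aₙ` are positive
elements of the unit ball with `φ aᵢ = 1`, and `b` is a positive element of the unit ball,
then `φ (1 - b) ≤ ‖a₁⋯aₙ (1 - b) aₙ⋯a₁‖`. -/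
theorem stmt3 {A : Type*} [NormedRing A] [StarRing A] [CStarRing A]
    [NormedAlgebra ℂ A] [CompleteSpace A] [StarModule ℂ A]
    [PartialOrder A] [StarOrderedRing A]
    (φ : A →L[ℂ] ℂ) (hφnorm : ‖φ‖ = 1) (hφpos : ∀ x : A, 0 ≤ x → 0 ≤ φ x)
    (l : List A) (hl : ∀ x ∈ l, 0 ≤ x ∧ ‖x‖ ≤ 1 ∧ φ x = 1)
    (b : A) (hb : 0 ≤ b) (hb1 : ‖b‖ ≤ 1) :
    φ (1 - b) ≤ (‖l.prod * (1 - b) * l.reverse.prod‖ : ℂ) := by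
  letI : CStarAlgebra A :=
    { toNormedRing := ‹_›, toStarRing := ‹_›, toCompleteSpace := ‹_›, toCStarRing := ‹_›,
      toNormedAlgebra := ‹_›, toStarModule := ‹_› }
  have key : ∀ (l : List A), (∀ x ∈ l, 0 ≤ x ∧ ‖x‖ ≤ 1 ∧ φ x = 1) → ∀ x : A,
      φ (l.prod * x * l.reverse.prod) = φ x := by
    intro l hl
    induction l with
    | nil => intro x; simp
    | cons a t ih =>
      intro x
      obtain ⟨ha, ha1, haφ⟩ := hl a List.mem_cons_self
      have ht := fun y hy => hl y (List.mem_cons_of_mem a hy)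
      have hrev : (a :: t).reverse.prod = t.reverse.prod * a := by
        simp [List.reverse_cons]
      rw [List.prod_cons, hrev]
      have hassoc : a * t.prod * x * (t.reverse.prod * a)
          = a * (t.prod * x * t.reverse.prod * a) := by
        simp only [mul_assoc]
      rw [hassoc, aux_absorb_left φ hφnorm hφpos ha ha1 haφ,
        aux_absorb_right φ hφnorm hφpos ha ha1 haφ, ih ht]
  have heq : φ (l.prod * (1 - b) * l.reverse.prod) = φ (1 - b) := key l hl (1 - b)
  have hpos : 0 ≤ φ (1 - b) := by
    apply hφpos
    have : b ≤ 1 := (CStarAlgebra.norm_le_one_iff_of_nonneg b (ha := hb)).mp hb1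
    exact sub_nonneg.mpr this
  set P := l.prod * (1 - b) * l.reverse.prod with hP
  have hnorm : ‖φ P‖ ≤ ‖P‖ := by
    calc ‖φ P‖ ≤ ‖φ‖ * ‖P‖ := φ.le_opNorm P
      _ = ‖P‖ := by rw [hφnorm, one_mul]
  rw [Complex.le_def]
  obtain ⟨hre, him⟩ := Complex.le_def.mp hpos
  constructor
  · simp only [Complex.ofReal_re]
    calc (φ (1 - b)).re ≤ ‖φ (1 - b)‖ := Complex.re_le_norm _
      _ = ‖φ P‖ := by rw [heq]
      _ ≤ ‖P‖ := hnorm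
  · simp only [Complex.ofReal_im]
    simpa using him.symm
end

section
/- Let A be a C*-algebra, p a projection in A, and a a positive contraction in A with ‖p(1−a)‖ ≤ 2ε. Then ‖a − (p + p⊥ a p⊥)‖ ≤ 8ε, where p⊥ = 1 − p. -/
open scoped ComplexOrder

/-- If `p` is a projection in a unital C*-algebra `A`, `a` a positive
contraction with `‖p (1 - a)‖ ≤ 2ε`, then `‖a - (p + p⊥ a p⊥)‖ ≤ 8ε`, where
`p⊥ = 1 - p`. -/
theorem stmt6 {A : Type*} [NormedRing A] [StarRing A] [CStarRing A]
    [NormedAlgebra ℂ A] [CompleteSpace A] [StarModule ℂ A]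
    [PartialOrder A] [StarOrderedRing A]
    (p a : A) (hp : IsIdempotentElem p) (hps : IsSelfAdjoint p)
    (ha : 0 ≤ a) (ha1 : ‖a‖ ≤ 1)
    (ε : ℝ) (hε : 0 < ε) (h : ‖p * (1 - a)‖ ≤ 2 * ε) :
    ‖a - (p + (1 - p) * a * (1 - p))‖ ≤ 8 * ε := by
  have hq : IsIdempotentElem (1 - p) := hp.one_sub
  have hqs : IsSelfAdjoint (1 - p) := (IsSelfAdjoint.one A).sub hps
  -- norm of the projection 1 - p is at most 1
  have hqn : ‖(1 - p : A)‖ ≤ 1 := by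
    have h1 : ‖(1 - p : A)‖ * ‖(1 - p : A)‖ = ‖(1 - p : A)‖ := by
      rw [← CStarRing.norm_star_mul_self, hqs.star_eq, hq.eq]
    nlinarith [norm_nonneg (1 - p : A)]
  -- selfadjointness of 1 - a
  have has : IsSelfAdjoint (1 - a) := (IsSelfAdjoint.one A).sub ha.isSelfAdjoint
  have hflip : ‖(1 - a) * p‖ = ‖p * (1 - a)‖ := by
    rw [← norm_star, star_mul, has.star_eq, hps.star_eq]
  have heq : a - (p + (1 - p) * a * (1 - p))
      = -(p * (1 - a)) - (1 - p) * ((1 - a) * p) := by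
    simp only [mul_sub, sub_mul, mul_one, one_mul]
    rw [IsIdempotentElem] at hp
    rw [hp]
    noncomm_ring
  rw [heq]
  calc ‖-(p * (1 - a)) - (1 - p) * ((1 - a) * p)‖
      ≤ ‖-(p * (1 - a))‖ + ‖(1 - p) * ((1 - a) * p)‖ := norm_sub_le _ _
    _ ≤ ‖p * (1 - a)‖ + ‖(1 - p : A)‖ * ‖(1 - a) * p‖ := by
        rw [norm_neg]; gcongr; exact norm_mul_le _ _
    _ ≤ 2 * ε + 1 * (2 * ε) := by
        gcongr
        rw [hflip]; exact h
    _ ≤ 8 * ε := by linarith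
end

section
/- Let m, n ∈ ℕ, and let 𝒳 be a family of subsets of ℕ each of size at most m, such that every k ∈ ℕ belongs to at most n members of 𝒳. Then ℕ can be partitioned into at most n(m−1)+1 sets A₀,…,A_{n(m−1)} such that |Aⱼ ∩ X| ≤ 1 for every j and every X ∈ 𝒳. In particular, for every ultrafilter 𝒰 on ℕ there exists U ∈ 𝒰 with |U ∩ X| ≤ 1 for all X ∈ 𝒳. -/
open Classical in
noncomputable def greedyCol (Adj : ℕ → ℕ → Prop) (N : ℕ) : ℕ → Fin (N + 1) := fun k =>
  let forb : Finset (Fin (N + 1)) :=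
    ((Finset.range k).filter (fun j => Adj j k)).attach.image (fun j => greedyCol Adj N j.1)
  if h : (Finset.univ \ forb).Nonempty then h.choose else 0
termination_by k => k
decreasing_by
  exact Finset.mem_range.mp (Finset.mem_filter.mp j.2).1

open Classical in
theorem greedyCol_proper (Adj : ℕ → ℕ → Prop) (N : ℕ) (k : ℕ)
    (hcard : (((Finset.range k).filter (fun j => Adj j k))).card ≤ N)
    (j : ℕ) (hjk : j < k) (hadj : Adj j k) : greedyCol Adj N j ≠ greedyCol Adj N k := by
  conv_rhs => rw [greedyCol]
  set forb : Finset (Fin (N + 1)) :=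
    ((Finset.range k).filter (fun j => Adj j k)).attach.image (fun j => greedyCol Adj N j.1) with hforb
  have hne : (Finset.univ \ forb).Nonempty := by
    have h1 : forb.card ≤ N := le_trans (Finset.card_image_le.trans (by simp)) hcard
    rw [Finset.sdiff_nonempty]
    intro hsub
    have := Finset.card_le_card hsub
    simp at this
    omega
  rw [dif_pos hne]
  have := hne.choose_spec
  rw [Finset.mem_sdiff] at this
  intro heq
  exact this.2 (heq ▸ Finset.mem_image.mpr ⟨⟨j, Finset.mem_filter.mpr ⟨Finset.mem_range.mpr hjk, hadj⟩⟩, Finset.mem_attach _ _, rfl⟩)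

/-- If every member of `X ⊆ 𝒫(ℕ)` has at most `m` elements and every
`k ∈ ℕ` lies in at most `n` members of `X`, then `ℕ` can be partitioned into
`n(m-1)+1` sets each meeting every member of `X` in at most one point; in particular
every ultrafilter on `ℕ` contains a set meeting every member of `X` in at most one
point. -/
theorem stmt9 (m n : ℕ) (X : Set (Set ℕ))
    (hsize : ∀ s ∈ X, s.Finite ∧ s.ncard ≤ m)
    (hdeg : ∀ k : ℕ, {s ∈ X | k ∈ s}.Finite ∧ {s ∈ X | k ∈ s}.ncard ≤ n) :
    (∃ A : Fin (n * (m - 1) + 1) → Set ℕ,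
        (∀ k : ℕ, ∃ j, k ∈ A j) ∧
        (∀ i j, i ≠ j → Disjoint (A i) (A j)) ∧
        (∀ j, ∀ s ∈ X, (A j ∩ s).Subsingleton)) ∧
      ∀ U : Ultrafilter ℕ, ∃ u ∈ U, ∀ s ∈ X, (u ∩ s).Subsingleton := by
  classical
  set N := n * (m - 1) with hN
  set Adj : ℕ → ℕ → Prop := fun j k => j ≠ k ∧ ∃ s ∈ X, j ∈ s ∧ k ∈ s with hAdj
  have hbound : ∀ k, ((@Finset.filter _ (fun j => Adj j k)
      (fun a => Classical.propDecidable _) (Finset.range k))).card ≤ N := by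
    intro k
    rw [Finset.filter_congr_decidable]
    set T : Finset (Set ℕ) := (hdeg k).1.toFinset with hT
    set F : Set ℕ → Finset ℕ := fun s => if h : s.Finite then h.toFinset.erase k else ∅ with hF
    have hsub : ((Finset.range k).filter (fun j => Adj j k)) ⊆ T.biUnion F := by
      intro j hj
      rw [Finset.mem_filter] at hj
      obtain ⟨hjk, s, hsX, hjs, hks⟩ := hj.2
      refine Finset.mem_biUnion.mpr ⟨s, ?_, ?_⟩
      · simp [hT, Set.Finite.mem_toFinset]; exact ⟨hsX, hks⟩
      · have hfin := (hsize s hsX).1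
        simp only [hF, dif_pos hfin]
        exact Finset.mem_erase.mpr ⟨hjk, hfin.mem_toFinset.mpr hjs⟩
    have hcardF : ∀ s ∈ T, (F s).card ≤ m - 1 := by
      intro s hsT
      rw [hT, Set.Finite.mem_toFinset] at hsT
      obtain ⟨hsX, hks⟩ := hsT
      have hfin := (hsize s hsX).1
      simp only [hF, dif_pos hfin]
      have h2 : hfin.toFinset.card ≤ m := by
        rw [← Set.ncard_eq_toFinset_card _ hfin]
        exact (hsize s hsX).2
      have hk : k ∈ hfin.toFinset := hfin.mem_toFinset.mpr hks
      have := Finset.card_erase_of_mem hk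
      omega
    have hTcard : T.card ≤ n := by
      rw [hT, ← Set.ncard_eq_toFinset_card _ (hdeg k).1]
      exact (hdeg k).2
    calc ((Finset.range k).filter (fun j => Adj j k)).card ≤ (T.biUnion F).card :=
          Finset.card_le_card hsub
      _ ≤ T.card * (m - 1) := Finset.card_biUnion_le_card_mul _ _ _ hcardF
      _ ≤ n * (m - 1) := Nat.mul_le_mul_right _ hTcard
  set c : ℕ → Fin (N + 1) := greedyCol Adj N with hc
  have hproper : ∀ a b, a ≠ b → (∃ s ∈ X, a ∈ s ∧ b ∈ s) → c a ≠ c b := by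
    intro a b hab hs
    rcases Nat.lt_or_ge a b with h | h
    · exact greedyCol_proper Adj N b (hbound b) a h ⟨hab, hs⟩
    · have h' : b < a := lt_of_le_of_ne h (Ne.symm hab)
      exact fun he =>
        greedyCol_proper Adj N a (hbound a) b h'
          ⟨hab.symm, hs.imp fun s ⟨h1, h2, h3⟩ => ⟨h1, h3, h2⟩⟩ he.symm
  set A : Fin (N + 1) → Set ℕ := fun j => {k | c k = j} with hA
  have hsub : ∀ j, ∀ s ∈ X, (A j ∩ s).Subsingleton := by
    intro j s hsX a ha b hb
    by_contra hne
    exact hproper a b hne ⟨s, hsX, ha.2, hb.2⟩ (ha.1.trans hb.1.symm)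
  refine ⟨⟨A, fun k => ⟨c k, rfl⟩, ?_, hsub⟩, ?_⟩
  · intro i j hij
    rw [Set.disjoint_left]
    rintro a (ha : c a = i) (hb : c a = j)
    exact hij (ha ▸ hb)
  · intro U
    have hmem : (⋃ j ∈ (Set.univ : Set (Fin (N + 1))), A j) ∈ U := by
      have : (⋃ j ∈ (Set.univ : Set (Fin (N + 1))), A j) = Set.univ := by
        ext k; simp; exact ⟨c k, rfl⟩
      rw [this]; exact Filter.univ_mem
    obtain ⟨j, -, hj⟩ := (Ultrafilter.finite_biUnion_mem_iff Set.finite_univ).mp hmem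
    exact ⟨A j, hj, hsub j⟩
end

section
/- Let H be a separable Hilbert space with orthonormal basis (eₙ), T ∈ B(H), and g : ℕ → ℕ increasing with ‖P_{g(n)} T P_{ℕ∖g(n+1)}‖ ≤ 1/n² and ‖P_{ℕ∖g(n+1)} T P_{g(n)}‖ ≤ 1/n² for all n ≥ 1 (where P_X denotes the projection onto span{eₖ : k ∈ X} and g(n) is identified with {0,…,g(n)−1}). Then the operator Σₙ (P_{Gₙ} T P_{ℕ∖g(n+2)} + P_{ℕ∖g(n+2)} T P_{Gₙ}) is compact, where Gₙ = [g(n), g(n+1)). -/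
open scoped InnerProduct

section Aux

variable {H : Type*} [NormedAddCommGroup H] [InnerProductSpace ℂ H] [CompleteSpace H]

/-- Two continuous linear maps agreeing on a Hilbert basis are equal. -/
lemma clm_ext_hilbertBasis (e : HilbertBasis ℕ ℂ H) {f g : H →L[ℂ] H}
    (h : ∀ k, f (e k) = g (e k)) : f = g := by
  have hd : Dense (↑(Submodule.span ℂ (Set.range (e : ℕ → H))) : Set H) := by
    have := e.dense_span
    rw [Submodule.dense_iff_topologicalClosure_eq_top]
    simpa using this
  refine ContinuousLinearMap.ext_on hd ?_
  rintro x ⟨k, rfl⟩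
  exact h k

/-- `PX X` coincides with the orthogonal projection onto the closure of the span. -/
lemma PX_eq_proj (e : HilbertBasis ℕ ℂ H) (PX : Set ℕ → (H →L[ℂ] H))
    (hPX : ∀ (X : Set ℕ) (k : ℕ),
      (k ∈ X → PX X (e k) = e k) ∧ (k ∉ X → PX X (e k) = 0)) (X : Set ℕ) :
    PX X = (Submodule.span ℂ ((e : ℕ → H) '' X)).topologicalClosure.subtypeL ∘L
      Submodule.orthogonalProjectionOnto (Submodule.span ℂ ((e : ℕ → H) '' X)).topologicalClosure := by
  set W := Submodule.span ℂ ((e : ℕ → H) '' X)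
  set K := W.topologicalClosure
  refine clm_ext_hilbertBasis e fun k => ?_
  by_cases hk : k ∈ X
  · rw [(hPX X k).1 hk]
    have hmem : e k ∈ K :=
      Submodule.le_topologicalClosure W (Submodule.subset_span ⟨k, hk, rfl⟩)
    simp only [ContinuousLinearMap.comp_apply]
    exact (Submodule.starProjection_eq_self_iff.mpr hmem).symm
  · rw [(hPX X k).2 hk]
    have hW : e k ∈ Wᗮ := by
      rw [Submodule.mem_orthogonal]
      intro u hu
      induction hu using Submodule.span_induction with
      | mem x hx =>
        obtain ⟨j, hj, rfl⟩ := hx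
        have : j ≠ k := fun h => hk (h ▸ hj)
        exact e.orthonormal.2 this
      | zero => simp
      | add x y _ _ hx hy => rw [inner_add_left, hx, hy, add_zero]
      | smul c x _ hx => rw [inner_smul_left, hx, mul_zero]
    have hK : e k ∈ Kᗮ := by
      have h1 : K ≤ Wᗮᗮ :=
        Submodule.topologicalClosure_minimal W (Submodule.le_orthogonal_orthogonal W)
          (Submodule.isClosed_orthogonal _)
      exact Submodule.orthogonal_le h1 (Submodule.le_orthogonal_orthogonal Wᗮ hW)
    simp only [ContinuousLinearMap.comp_apply]
    rw [Submodule.orthogonalProjectionOnto_apply_of_mem_orthogonal hK]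
    simp

lemma PX_norm_le (e : HilbertBasis ℕ ℂ H) (PX : Set ℕ → (H →L[ℂ] H))
    (hPX : ∀ (X : Set ℕ) (k : ℕ),
      (k ∈ X → PX X (e k) = e k) ∧ (k ∉ X → PX X (e k) = 0)) (X : Set ℕ) :
    ‖PX X‖ ≤ 1 := by
  rw [PX_eq_proj e PX hPX X]
  refine (ContinuousLinearMap.opNorm_comp_le _ _).trans ?_
  calc ‖(Submodule.span ℂ ((e : ℕ → H) '' X)).topologicalClosure.subtypeL‖ *
        ‖Submodule.orthogonalProjectionOnto (Submodule.span ℂ ((e : ℕ → H) '' X)).topologicalClosure‖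
      ≤ 1 * 1 := by
        gcongr
        · exact Submodule.norm_subtypeL_le _
        · exact Submodule.orthogonalProjectionOnto_norm_le _
    _ = 1 := one_mul 1

/-- A continuous linear map with range in a finite dimensional submodule is compact. -/
lemma isCompactOperator_of_mem_finiteDimensional (f : H →L[ℂ] H) (V : Submodule ℂ H)
    [FiniteDimensional ℂ V] (hf : ∀ x, f x ∈ V) : IsCompactOperator f := by
  refine ⟨Subtype.val '' Metric.closedBall (0 : V) ‖f‖, ?_, ?_⟩
  · exact (isCompact_closedBall _ _).image continuous_subtype_val
  · refine Filter.mem_of_superset (Metric.ball_mem_nhds 0 one_pos) ?_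
    intro x hx
    refine ⟨⟨f x, hf x⟩, ?_, rfl⟩
    rw [Metric.mem_closedBall, dist_zero_right]
    calc ‖(⟨f x, hf x⟩ : V)‖ = ‖f x‖ := rfl
      _ ≤ ‖f‖ * ‖x‖ := f.le_opNorm x
      _ ≤ ‖f‖ * 1 := by
          gcongr
          exact le_of_lt (by simpa using hx)
      _ = ‖f‖ := mul_one _

/-- `PX` of a finite set is a compact operator. -/
lemma PX_finite_compact (e : HilbertBasis ℕ ℂ H) (PX : Set ℕ → (H →L[ℂ] H))
    (hPX : ∀ (X : Set ℕ) (k : ℕ),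
      (k ∈ X → PX X (e k) = e k) ∧ (k ∉ X → PX X (e k) = 0))
    (X : Set ℕ) (hX : X.Finite) : IsCompactOperator (PX X) := by
  set W := Submodule.span ℂ ((e : ℕ → H) '' X)
  have hWfd : FiniteDimensional ℂ W := FiniteDimensional.span_of_finite ℂ (hX.image _)
  have hWc : IsClosed (W : Set H) := Submodule.closed_of_finiteDimensional W
  have hKW : W.topologicalClosure = W := le_antisymm
    (Submodule.topologicalClosure_minimal W le_rfl hWc) (Submodule.le_topologicalClosure W)
  refine isCompactOperator_of_mem_finiteDimensional (PX X) W fun x => ?_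
  rw [PX_eq_proj e PX hPX X]
  simp only [ContinuousLinearMap.comp_apply]
  exact hKW.le ((Submodule.orthogonalProjectionOnto W.topologicalClosure) x).2

/-- Composition law: if `X ⊆ Y` then `PX Y ∘ PX X = PX X` and `PX X ∘ PX Y = PX X`. -/
lemma PX_comp_left (e : HilbertBasis ℕ ℂ H) (PX : Set ℕ → (H →L[ℂ] H))
    (hPX : ∀ (X : Set ℕ) (k : ℕ),
      (k ∈ X → PX X (e k) = e k) ∧ (k ∉ X → PX X (e k) = 0))
    {X Y : Set ℕ} (hXY : X ⊆ Y) : PX Y ∘L PX X = PX X := by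
  refine clm_ext_hilbertBasis e fun k => ?_
  by_cases hk : k ∈ X
  · simp [ContinuousLinearMap.comp_apply, (hPX X k).1 hk, (hPX Y k).1 (hXY hk)]
  · simp [ContinuousLinearMap.comp_apply, (hPX X k).2 hk]

lemma PX_comp_right (e : HilbertBasis ℕ ℂ H) (PX : Set ℕ → (H →L[ℂ] H))
    (hPX : ∀ (X : Set ℕ) (k : ℕ),
      (k ∈ X → PX X (e k) = e k) ∧ (k ∉ X → PX X (e k) = 0))
    {X Y : Set ℕ} (hXY : X ⊆ Y) : PX X ∘L PX Y = PX X := by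
  refine clm_ext_hilbertBasis e fun k => ?_
  by_cases hk : k ∈ Y
  · simp [ContinuousLinearMap.comp_apply, (hPX Y k).1 hk]
  · simp [ContinuousLinearMap.comp_apply, (hPX Y k).2 hk, (hPX X k).2 (fun h => hk (hXY h))]

end Aux

/-- Let `(eₙ)` be an orthonormal basis of a separable Hilbert space `H`,
`T ∈ B(H)`, and `g : ℕ → ℕ` strictly increasing with
`‖P_{g(n)} T P_{ℕ∖g(n+1)}‖ ≤ 1/n²` and `‖P_{ℕ∖g(n+1)} T P_{g(n)}‖ ≤ 1/n²` for `n ≥ 1`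
(where `P_X` is the orthogonal projection onto `span{eₖ : k ∈ X}`, characterized by its
action on the basis).  Then `Σₙ (P_{Gₙ} T P_{ℕ∖g(n+2)} + P_{ℕ∖g(n+2)} T P_{Gₙ})`
converges and is a compact operator, where `Gₙ = [g(n), g(n+1))`. -/
theorem stmt12 {H : Type*} [NormedAddCommGroup H] [InnerProductSpace ℂ H]
    [CompleteSpace H] (e : HilbertBasis ℕ ℂ H)
    (PX : Set ℕ → (H →L[ℂ] H))
    (hPX : ∀ (X : Set ℕ) (k : ℕ),
      (k ∈ X → PX X (e k) = e k) ∧ (k ∉ X → PX X (e k) = 0))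
    (T : H →L[ℂ] H) (g : ℕ → ℕ) (hg : StrictMono g)
    (h1 : ∀ n : ℕ, 1 ≤ n →
      ‖PX (Set.Iio (g n)) ∘L T ∘L PX (Set.Ici (g (n + 1)))‖ ≤ 1 / (n : ℝ) ^ 2)
    (h2 : ∀ n : ℕ, 1 ≤ n →
      ‖PX (Set.Ici (g (n + 1))) ∘L T ∘L PX (Set.Iio (g n))‖ ≤ 1 / (n : ℝ) ^ 2) :
    ∃ S : H →L[ℂ] H,
      HasSum (fun n : ℕ =>
        PX (Set.Ico (g n) (g (n + 1))) ∘L T ∘L PX (Set.Ici (g (n + 2))) +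
          PX (Set.Ici (g (n + 2))) ∘L T ∘L PX (Set.Ico (g n) (g (n + 1)))) S ∧
      IsCompactOperator S := by
  set f : ℕ → (H →L[ℂ] H) := fun n =>
    PX (Set.Ico (g n) (g (n + 1))) ∘L T ∘L PX (Set.Ici (g (n + 2))) +
      PX (Set.Ici (g (n + 2))) ∘L T ∘L PX (Set.Ico (g n) (g (n + 1))) with hf
  have hsub : ∀ n : ℕ, Set.Ico (g n) (g (n + 1)) ⊆ Set.Iio (g (n + 1)) :=
    fun n k hk => hk.2
  -- rewrite the two summands through the `Iio` projection
  have hA : ∀ n : ℕ, PX (Set.Ico (g n) (g (n + 1))) ∘L T ∘L PX (Set.Ici (g (n + 2))) =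
      PX (Set.Ico (g n) (g (n + 1))) ∘L
        (PX (Set.Iio (g (n + 1))) ∘L T ∘L PX (Set.Ici (g (n + 2)))) := by
    intro n
    conv_rhs => rw [← ContinuousLinearMap.comp_assoc, PX_comp_right e PX hPX (hsub n)]
  have hB : ∀ n : ℕ, PX (Set.Ici (g (n + 2))) ∘L T ∘L PX (Set.Ico (g n) (g (n + 1))) =
      (PX (Set.Ici (g (n + 2))) ∘L T ∘L PX (Set.Iio (g (n + 1)))) ∘L
        PX (Set.Ico (g n) (g (n + 1))) := by
    intro n
    conv_rhs => rw [ContinuousLinearMap.comp_assoc, ContinuousLinearMap.comp_assoc,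
      PX_comp_left e PX hPX (hsub n)]
  -- norm bound
  have hbound : ∀ n : ℕ, ‖f n‖ ≤ 2 * (1 / ((n : ℝ) + 1) ^ 2) := by
    intro n
    have hmid1 : ‖PX (Set.Iio (g (n + 1))) ∘L T ∘L PX (Set.Ici (g (n + 2)))‖ ≤
        1 / ((n : ℝ) + 1) ^ 2 := by
      have := h1 (n + 1) (Nat.le_add_left 1 n)
      push_cast at this ⊢
      exact this
    have hmid2 : ‖PX (Set.Ici (g (n + 2))) ∘L T ∘L PX (Set.Iio (g (n + 1)))‖ ≤
        1 / ((n : ℝ) + 1) ^ 2 := by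
      have := h2 (n + 1) (Nat.le_add_left 1 n)
      push_cast at this ⊢
      exact this
    have hPn : ‖PX (Set.Ico (g n) (g (n + 1)))‖ ≤ 1 := PX_norm_le e PX hPX _
    have hA' : ‖PX (Set.Ico (g n) (g (n + 1))) ∘L T ∘L PX (Set.Ici (g (n + 2)))‖ ≤
        1 / ((n : ℝ) + 1) ^ 2 := by
      rw [hA n]
      calc ‖PX (Set.Ico (g n) (g (n + 1))) ∘L
            (PX (Set.Iio (g (n + 1))) ∘L T ∘L PX (Set.Ici (g (n + 2))))‖
          ≤ ‖PX (Set.Ico (g n) (g (n + 1)))‖ *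
            ‖PX (Set.Iio (g (n + 1))) ∘L T ∘L PX (Set.Ici (g (n + 2)))‖ :=
            ContinuousLinearMap.opNorm_comp_le _ _
        _ ≤ 1 * (1 / ((n : ℝ) + 1) ^ 2) := by
            apply mul_le_mul hPn hmid1 (norm_nonneg _) zero_le_one
        _ = 1 / ((n : ℝ) + 1) ^ 2 := one_mul _
    have hB' : ‖PX (Set.Ici (g (n + 2))) ∘L T ∘L PX (Set.Ico (g n) (g (n + 1)))‖ ≤
        1 / ((n : ℝ) + 1) ^ 2 := by
      rw [hB n]
      calc ‖(PX (Set.Ici (g (n + 2))) ∘L T ∘L PX (Set.Iio (g (n + 1)))) ∘L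
            PX (Set.Ico (g n) (g (n + 1)))‖
          ≤ ‖PX (Set.Ici (g (n + 2))) ∘L T ∘L PX (Set.Iio (g (n + 1)))‖ *
            ‖PX (Set.Ico (g n) (g (n + 1)))‖ :=
            ContinuousLinearMap.opNorm_comp_le _ _
        _ ≤ (1 / ((n : ℝ) + 1) ^ 2) * 1 := by
            apply mul_le_mul hmid2 hPn (norm_nonneg _) (by positivity)
        _ = 1 / ((n : ℝ) + 1) ^ 2 := mul_one _
    calc ‖f n‖ ≤ ‖PX (Set.Ico (g n) (g (n + 1))) ∘L T ∘L PX (Set.Ici (g (n + 2)))‖ +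
          ‖PX (Set.Ici (g (n + 2))) ∘L T ∘L PX (Set.Ico (g n) (g (n + 1)))‖ :=
        norm_add_le _ _
      _ ≤ 1 / ((n : ℝ) + 1) ^ 2 + 1 / ((n : ℝ) + 1) ^ 2 := add_le_add hA' hB'
      _ = 2 * (1 / ((n : ℝ) + 1) ^ 2) := by ring
  -- summability
  have hsummable : Summable f := by
    apply Summable.of_norm
    refine Summable.of_nonneg_of_le (fun n => norm_nonneg _) hbound ?_
    apply Summable.mul_left
    have : Summable (fun n : ℕ => 1 / ((n : ℝ)) ^ 2) :=
      Real.summable_one_div_nat_pow.mpr one_lt_two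
    have := (summable_nat_add_iff 1).mpr this
    refine this.congr fun n => ?_
    push_cast
    ring_nf
  have hhs : HasSum f (∑' n, f n) := hsummable.hasSum
  refine ⟨∑' n, f n, hhs, ?_⟩
  -- compactness: each term is compact, and compact operators are closed
  have hcomp : ∀ n : ℕ, IsCompactOperator (f n) := by
    intro n
    have hfin : (Set.Ico (g n) (g (n + 1))).Finite := Set.finite_Ico _ _
    have hPc : IsCompactOperator (PX (Set.Ico (g n) (g (n + 1)))) :=
      PX_finite_compact e PX hPX _ hfin
    have hAc : IsCompactOperator
        (PX (Set.Ico (g n) (g (n + 1))) ∘L T ∘L PX (Set.Ici (g (n + 2)))) := by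
      rw [hA n, ContinuousLinearMap.coe_comp']
      exact hPc.comp_clm (PX (Set.Iio (g (n + 1))) ∘L T ∘L PX (Set.Ici (g (n + 2))))
    have hBc : IsCompactOperator
        (PX (Set.Ici (g (n + 2))) ∘L T ∘L PX (Set.Ico (g n) (g (n + 1)))) := by
      rw [hB n, ContinuousLinearMap.coe_comp']
      exact hPc.clm_comp (PX (Set.Ici (g (n + 2))) ∘L T ∘L PX (Set.Iio (g (n + 1))))
    simpa [hf] using hAc.add hBc
  have htend : Filter.Tendsto (fun s : Finset ℕ => ∑ i ∈ s, f i) Filter.atTop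
      (nhds (∑' n, f n)) := hhs
  refine isCompactOperator_of_tendsto htend (Filter.Eventually.of_forall fun s => ?_)
  classical
  induction s using Finset.induction with
  | empty =>
    rw [Finset.sum_empty, ContinuousLinearMap.coe_zero']
    exact (isCompactOperator_zero (M₁ := H) (M₂ := H))
  | insert _ _ hns ih =>
    rw [Finset.sum_insert hns, ContinuousLinearMap.coe_add']
    exact (hcomp _).add ih
end

section
/- For every ε > 0 and every nondecreasing sequence (rₙ) of nonnegative reals with r₀ = 0 and rₙ ↑ r ≤ 1, there exists a strictly increasing sequence (nₖ) with n₀ = 0 such that Σₖ √(r_{n_{k+1}} − r_{n_k}) < √r + ε. -/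
/-- For every `ε > 0` and every nondecreasing sequence `(rₙ)` of nonnegative
reals with `r₀ = 0` converging to `r ≤ 1`, there is a strictly increasing sequence `(nₖ)`
with `n₀ = 0` such that `Σₖ √(r_{n_{k+1}} - r_{n_k}) < √r + ε`. -/
theorem stmt13 (r : ℕ → ℝ) (hmono : Monotone r) (h0 : r 0 = 0)
    (hnonneg : ∀ n, 0 ≤ r n) (R : ℝ)
    (hlim : Filter.Tendsto r Filter.atTop (nhds R)) (hR1 : R ≤ 1)
    (ε : ℝ) (hε : 0 < ε) :
    ∃ nk : ℕ → ℕ, StrictMono nk ∧ nk 0 = 0 ∧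
      Summable (fun k : ℕ => Real.sqrt (r (nk (k + 1)) - r (nk k))) ∧
      ∑' k : ℕ, Real.sqrt (r (nk (k + 1)) - r (nk k)) < Real.sqrt R + ε := by
  set δ : ℝ := ε / 2 with hδ
  have hδpos : 0 < δ := by positivity
  have hrle : ∀ n, r n ≤ R := fun n => hmono.ge_of_tendsto hlim n
  have hex : ∀ k : ℕ, ∃ N, R - δ ^ 2 / 4 ^ k < r N := by
    intro k
    have h1 : R - δ ^ 2 / 4 ^ k < R := by
      have : (0:ℝ) < δ ^ 2 / 4 ^ k := by positivity
      linarith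
    exact (hlim.eventually (eventually_gt_nhds h1)).exists
  choose f hf using hex
  set nk : ℕ → ℕ := fun k => Nat.rec 0 (fun k nkk => max (nkk + 1) (f (k + 1))) k with hnk
  have hnk0 : nk 0 = 0 := rfl
  have hsm : StrictMono nk := strictMono_nat_of_lt_succ fun k =>
    lt_of_lt_of_le (Nat.lt_succ_self _) (le_max_left _ _)
  have hlow : ∀ k : ℕ, R - δ ^ 2 / 4 ^ (k + 1) < r (nk (k + 1)) := fun k =>
    lt_of_lt_of_le (hf (k + 1)) (hmono (le_max_right _ _))
  set g : ℕ → ℝ := fun k => if k = 0 then Real.sqrt R else δ * (1 / 2) ^ k with hg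
  have hbound : ∀ k, Real.sqrt (r (nk (k + 1)) - r (nk k)) ≤ g k := by
    intro k
    cases k with
    | zero =>
      simp only [hg, if_pos rfl, hnk0, h0, sub_zero]
      exact Real.sqrt_le_sqrt (hrle _)
    | succ j =>
      have h1 : r (nk (j + 2)) - r (nk (j + 1)) ≤ δ ^ 2 / 4 ^ (j + 1) := by
        have := hlow j
        have := hrle (nk (j + 2))
        linarith
      have h2 : Real.sqrt (δ ^ 2 / 4 ^ (j + 1)) = δ * (1 / 2) ^ (j + 1) := by
        rw [show δ ^ 2 / 4 ^ (j + 1) = (δ * (1 / 2) ^ (j + 1)) ^ 2 by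
          rw [mul_pow, ← pow_mul, mul_comm (j + 1) 2, pow_mul, div_eq_mul_inv, ← inv_pow]
          norm_num]
        exact Real.sqrt_sq (by positivity)
      calc Real.sqrt (r (nk (j + 2)) - r (nk (j + 1)))
          ≤ Real.sqrt (δ ^ 2 / 4 ^ (j + 1)) := Real.sqrt_le_sqrt h1
        _ = δ * (1 / 2) ^ (j + 1) := h2
        _ = g (j + 1) := by simp [hg]
  have hgsum : Summable g := by
    have : Summable (fun k => g (k + 1)) := by
      have : Summable (fun k : ℕ => δ * (1 / 2) ^ (k + 1)) := by
        have h := (summable_geometric_of_lt_one (by norm_num : (0:ℝ) ≤ 1/2)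
          (by norm_num : (1:ℝ)/2 < 1))
        exact (((summable_nat_add_iff 1).2 h).mul_left δ)
      exact this.congr (fun k => by simp [hg])
    exact (summable_nat_add_iff 1).1 this
  have hsummain : Summable (fun k : ℕ => Real.sqrt (r (nk (k + 1)) - r (nk k))) :=
    Summable.of_nonneg_of_le (fun k => Real.sqrt_nonneg _) hbound hgsum
  refine ⟨nk, hsm, hnk0, hsummain, ?_⟩
  have htg : ∑' k, g k = Real.sqrt R + δ := by
    rw [Summable.tsum_eq_zero_add hgsum]
    have h1 : (fun k : ℕ => g (k + 1)) = fun k : ℕ => (δ / 2) * (1 / 2) ^ k := by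
      funext k; simp [hg]; ring
    rw [h1, tsum_mul_left, tsum_geometric_of_lt_one (by norm_num) (by norm_num)]
    simp [hg]
    ring
  calc ∑' k : ℕ, Real.sqrt (r (nk (k + 1)) - r (nk k))
      ≤ ∑' k, g k := Summable.tsum_le_tsum hbound hsummain hgsum
    _ = Real.sqrt R + δ := htg
    _ < Real.sqrt R + ε := by rw [hδ]; linarith
end

section
/- Let H be a separable Hilbert space with orthonormal basis (eₙ), let (Iₙ) be a partition of ℕ into finite sets with |Iₙ| → ∞, and let P be the projection onto the closed span of the unit vectors vₙ = |Iₙ|^{-1/2} Σ_{k∈Iₙ} eₖ. Then for any U ⊆ ℕ, ‖P_{Iₙ∖U} P‖² = |Iₙ∖U|/|Iₙ| for each n; hence if |U ∩ Iₙ|/|Iₙ| → 1 then ‖π(P_{ℕ∖U}) π(P)‖ = 0, i.e., π(P) ≤ π(P_U) in the Calkin algebra. -/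
open Classical Filter

local notation "⟪" x ", " y "⟫" => @inner ℂ _ _ x y

lemma aux_norm_sum_sq {H : Type*} [NormedAddCommGroup H] [InnerProductSpace ℂ H]
    {s : Finset ℕ} {u : ℕ → H}
    (h : ∀ m ∈ s, ∀ n ∈ s, m ≠ n → ⟪u m, u n⟫ = 0) :
    ‖∑ n ∈ s, u n‖ ^ 2 = ∑ n ∈ s, ‖u n‖ ^ 2 := by
  have h1 : ⟪∑ n ∈ s, u n, ∑ n ∈ s, u n⟫ = ∑ n ∈ s, ⟪u n, u n⟫ := by
    rw [sum_inner]
    refine Finset.sum_congr rfl fun m hm => ?_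
    rw [inner_sum, Finset.sum_eq_single_of_mem m hm]
    intro n hn hnm
    exact h m hm n hn (Ne.symm hnm)
  rw [← inner_self_eq_norm_sq (𝕜 := ℂ), h1, map_sum]
  exact Finset.sum_congr rfl fun n _ => inner_self_eq_norm_sq (𝕜 := ℂ) (u n)

lemma aux_rank_one_compact {H : Type*} [NormedAddCommGroup H] [InnerProductSpace ℂ H]
    (a : H →L[ℂ] ℂ) (b : H) : IsCompactOperator ⇑(a.smulRight b) := by
  refine ⟨(fun c : ℂ => c • b) '' Metric.closedBall 0 ‖a‖, ?_, ?_⟩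
  · exact (isCompact_closedBall _ _).image (continuous_id.smul continuous_const)
  · filter_upwards [Metric.closedBall_mem_nhds (0 : H) one_pos] with x hx
    refine ⟨a x, ?_, rfl⟩
    rw [Metric.mem_closedBall, dist_zero_right]
    calc ‖a x‖ ≤ ‖a‖ * ‖x‖ := a.le_opNorm x
      _ ≤ ‖a‖ * 1 := by
          have := Metric.mem_closedBall.mp hx
          rw [dist_zero_right] at this
          exact mul_le_mul_of_nonneg_left this (norm_nonneg a)
      _ = ‖a‖ := mul_one _

/-- Let `(Iₙ)` be a partition of `ℕ` into finite sets with `|Iₙ| → ∞`, let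
`vₙ = |Iₙ|^{-1/2} Σ_{k ∈ Iₙ} eₖ` and let `P` be the projection onto the closed span of
the `vₙ`.  Then `‖P_{Iₙ∖U} P‖² = |Iₙ∖U|/|Iₙ|` for every `n` and `U ⊆ ℕ`; and if
`|U ∩ Iₙ|/|Iₙ| → 1` then `P_{ℕ∖U} P` is compact, i.e. `π(P) ≤ π(P_U)` in the Calkin
algebra. -/
theorem stmt16 {H : Type*} [NormedAddCommGroup H] [InnerProductSpace ℂ H]
    [CompleteSpace H] (e : HilbertBasis ℕ ℂ H)
    (I : ℕ → Finset ℕ) (hne : ∀ n, (I n).Nonempty)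
    (hdisj : ∀ m n, m ≠ n → Disjoint (I m) (I n))
    (hcover : ∀ k : ℕ, ∃ n, k ∈ I n)
    (hsize : Tendsto (fun n => ((I n).card : ℝ)) atTop atTop)
    (v : ℕ → H)
    (hv : ∀ n, v n = ((Real.sqrt (I n).card : ℂ))⁻¹ • ∑ k ∈ I n, e k)
    (P : H →L[ℂ] H) (hPi : IsIdempotentElem P) (hPs : IsSelfAdjoint P)
    (hPfix : ∀ n, P (v n) = v n)
    (hPrange : ∀ u : H, P u ∈ (Submodule.span ℂ (Set.range v)).topologicalClosure)
    (PX : Set ℕ → (H →L[ℂ] H))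
    (hPX : ∀ (X : Set ℕ) (k : ℕ),
      (k ∈ X → PX X (e k) = e k) ∧ (k ∉ X → PX X (e k) = 0)) :
    (∀ (n : ℕ) (U : Set ℕ),
        ‖PX ((↑(I n) : Set ℕ) \ U) ∘L P‖ ^ 2 =
          (((I n).filter (· ∉ U)).card : ℝ) / (I n).card) ∧
      ∀ U : Set ℕ,
        Tendsto (fun n => (((I n).filter (· ∈ U)).card : ℝ) / (I n).card)
          atTop (nhds 1) →
        IsCompactOperator ⇑(PX Uᶜ ∘L P) := by
  have hcard : ∀ n, (0 : ℝ) < ((I n).card : ℝ) := fun n => by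
    exact_mod_cast (hne n).card_pos
  have heit : ∀ i j : ℕ, ⟪e i, e j⟫ = if i = j then 1 else 0 :=
    orthonormal_iff_ite.mp e.orthonormal
  have hdense : Dense ((Submodule.span ℂ (Set.range ⇑e) : Submodule ℂ H) : Set H) :=
    Submodule.dense_iff_topologicalClosure_eq_top.mpr e.dense_span
  have hext : ∀ A B : H →L[ℂ] H, (∀ k, A (e k) = B (e k)) → A = B := fun A B h =>
    ContinuousLinearMap.ext_on hdense (by rintro x ⟨k, rfl⟩; exact h k)
  -- formula for PX X (v n)
  have hPXv : ∀ (X : Set ℕ) (n : ℕ) (t : Finset ℕ), (∀ k, k ∈ t ↔ k ∈ I n ∧ k ∈ X) →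
      PX X (v n) = ((Real.sqrt (I n).card : ℂ))⁻¹ • ∑ k ∈ t, e k := by
    intro X n t ht
    rw [hv n, map_smul, map_sum]
    congr 1
    have hsub : t ⊆ I n := fun k hk => ((ht k).mp hk).1
    have h0 : ∀ k ∈ I n, k ∉ t → PX X (e k) = 0 := by
      intro k hk hkt
      exact (hPX X k).2 fun hkX => hkt ((ht k).mpr ⟨hk, hkX⟩)
    calc ∑ k ∈ I n, PX X (e k) = ∑ k ∈ t, PX X (e k) := (Finset.sum_subset hsub h0).symm
      _ = ∑ k ∈ t, e k := Finset.sum_congr rfl fun k hk => (hPX X k).1 ((ht k).mp hk).2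
  have hPXv0 : ∀ (X : Set ℕ) (n : ℕ), (∀ k ∈ I n, k ∉ X) → PX X (v n) = 0 := by
    intro X n h
    rw [hPXv X n ∅ (by intro k; simp only [Finset.notMem_empty, false_iff]
                       rintro ⟨hk, hkX⟩; exact h k hk hkX),
      Finset.sum_empty, smul_zero]
  -- inner products of sums of basis vectors
  have hsum_inner : ∀ s t : Finset ℕ,
      ⟪∑ j ∈ s, e j, ∑ k ∈ t, e k⟫ = ((s ∩ t).card : ℂ) := by
    intro s t
    rw [sum_inner]
    calc (∑ j ∈ s, ⟪e j, ∑ k ∈ t, e k⟫) = ∑ j ∈ s, if j ∈ t then (1 : ℂ) else 0 := by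
          refine Finset.sum_congr rfl fun j _ => ?_
          rw [inner_sum]; simp [heit, Finset.sum_ite_eq]
      _ = ((s.filter (· ∈ t)).card : ℂ) := by rw [Finset.sum_boole]
      _ = ((s ∩ t).card : ℂ) := by rw [Finset.filter_mem_eq_inter]
  have hsqrtC : ∀ n, ((Real.sqrt (I n).card : ℝ) : ℂ) * ((Real.sqrt (I n).card : ℝ) : ℂ)
      = ((I n).card : ℂ) := by
    intro n
    rw [← Complex.ofReal_mul, Real.mul_self_sqrt (le_of_lt (hcard n))]
    norm_cast
  -- v is orthonormal
  have hv_inner : ∀ m n, ⟪v m, v n⟫ = if m = n then 1 else 0 := by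
    intro m n
    rw [hv m, hv n, inner_smul_left, inner_smul_right, hsum_inner]
    by_cases h : m = n
    · subst h
      rw [if_pos rfl, Finset.inter_self]
      have hs : ((Real.sqrt (I m).card : ℝ) : ℂ) ≠ 0 :=
        Complex.ofReal_ne_zero.mpr (ne_of_gt (Real.sqrt_pos.mpr (hcard m)))
      rw [map_inv₀, Complex.conj_ofReal]
      field_simp
      rw [sq, hsqrtC m]
    · rw [if_neg h, Finset.disjoint_iff_inter_eq_empty.mp (hdisj m n h)]
      simp
  have hv_on : Orthonormal ℂ v := orthonormal_iff_ite.mpr hv_inner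
  have hvnorm : ∀ n, ‖v n‖ = 1 := hv_on.1
  -- norm of PX X (v n)
  have hnormPXv : ∀ (X : Set ℕ) (n : ℕ) (t : Finset ℕ), (∀ k, k ∈ t ↔ k ∈ I n ∧ k ∈ X) →
      ‖PX X (v n)‖ ^ 2 = ((t.card : ℝ)) / ((I n).card : ℝ) := by
    intro X n t ht
    have hsum : ‖∑ k ∈ t, e k‖ ^ 2 = (t.card : ℝ) := by
      rw [← inner_self_eq_norm_sq (𝕜 := ℂ), hsum_inner, Finset.inter_self]
      simp
    rw [hPXv X n t ht, norm_smul, mul_pow, hsum]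
    have h1 : ‖((Real.sqrt (I n).card : ℝ) : ℂ)⁻¹‖ = (Real.sqrt (I n).card)⁻¹ := by
      rw [norm_inv, Complex.norm_real, Real.norm_eq_abs,
        abs_of_nonneg (Real.sqrt_nonneg _)]
    rw [h1, inv_pow, Real.sq_sqrt (le_of_lt (hcard n))]
    rw [inv_mul_eq_div]
  -- cross orthogonality
  have horth : ∀ (X : Set ℕ) m n, m ≠ n → ⟪PX X (v m), PX X (v n)⟫ = 0 := by
    intro X m n hmn
    rw [hPXv X m ((I m).filter (fun k => k ∈ X)) (by intro k; simp [Finset.mem_filter]),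
      hPXv X n ((I n).filter (fun k => k ∈ X)) (by intro k; simp [Finset.mem_filter]),
      inner_smul_left, inner_smul_right, hsum_inner]
    have hd : (I m).filter (fun k => k ∈ X) ∩ (I n).filter (fun k => k ∈ X) = ∅ :=
      Finset.disjoint_iff_inter_eq_empty.mp
        ((hdisj m n hmn).mono (Finset.filter_subset _ _) (Finset.filter_subset _ _))
    rw [hd]
    simp
  -- P is symmetric and contractive
  have hsym : ∀ x y : H, ⟪P x, y⟫ = ⟪x, P y⟫ := by
    intro x y
    have := hPs.isSymmetric x y
    simpa using this
  have hPnorm : ∀ x, ‖P x‖ ≤ ‖x‖ := by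
    intro x
    rcases eq_or_lt_of_le (norm_nonneg (P x)) with h0 | h0
    · rw [← h0]; exact norm_nonneg x
    · have h1 : ⟪P x, P x⟫ = ⟪x, P x⟫ := by
        rw [hsym x (P x)]
        congr 1
        have := congrFun (congrArg DFunLike.coe hPi) x
        simpa [ContinuousLinearMap.mul_apply] using this
      have h2 : ‖P x‖ ^ 2 ≤ ‖x‖ * ‖P x‖ := by
        rw [← inner_self_eq_norm_sq (𝕜 := ℂ), h1]
        calc RCLike.re ⟪x, P x⟫ ≤ ‖⟪x, P x⟫‖ := RCLike.re_le_norm _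
          _ ≤ ‖x‖ * ‖P x‖ := norm_inner_le_norm _ _
      nlinarith
  -- two operators agreeing on all v m agree on range of P
  have hM : ∀ A B : H →L[ℂ] H, (∀ m, A (v m) = B (v m)) → ∀ x, A (P x) = B (P x) := by
    intro A B h x
    have hle : Submodule.span ℂ (Set.range v) ≤ LinearMap.ker ((A - B : H →L[ℂ] H) : H →ₗ[ℂ] H) := by
      rw [Submodule.span_le]
      rintro y ⟨m, rfl⟩
      simp [LinearMap.mem_ker, h m, sub_eq_zero]
    have hcl : (Submodule.span ℂ (Set.range v)).topologicalClosure
        ≤ LinearMap.ker ((A - B : H →L[ℂ] H) : H →ₗ[ℂ] H) :=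
      Submodule.topologicalClosure_minimal _ hle (ContinuousLinearMap.isClosed_ker _)
    have := hcl (hPrange x)
    rw [LinearMap.mem_ker] at this
    have h2 : A (P x) - B (P x) = 0 := by
      simpa [ContinuousLinearMap.sub_apply] using this
    exact sub_eq_zero.mp h2
  constructor
  · intro n U
    have hkey : PX ((↑(I n) : Set ℕ) \ U) ∘L P
        = (innerSL ℂ (v n)).smulRight (PX ((↑(I n) : Set ℕ) \ U) (v n)) := by
      set S : Set ℕ := (↑(I n) : Set ℕ) \ U with hS
      set w : H := PX S (v n) with hw
      have h1 : ∀ m, PX S (v m) = ((innerSL ℂ (v n)).smulRight w) (v m) := by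
        intro m
        rw [ContinuousLinearMap.smulRight_apply, innerSL_apply_apply, hv_inner]
        by_cases h : m = n
        · subst h; rw [if_pos rfl, one_smul]
        · rw [if_neg (Ne.symm h), zero_smul]
          refine hPXv0 S m fun k hk hkS => ?_
          have hkn : k ∈ I n := by simpa using hkS.1
          exact (Finset.disjoint_left.mp (hdisj m n h) hk) hkn
      ext x
      have h2 := hM _ _ h1 x
      show PX S (P x) = _
      rw [h2, ContinuousLinearMap.smulRight_apply, ContinuousLinearMap.smulRight_apply,
        innerSL_apply_apply, innerSL_apply_apply]
      congr 1
      rw [← hsym (v n) x, hPfix n]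
    rw [hkey, ContinuousLinearMap.norm_smulRight_apply, innerSL_apply_norm, hvnorm n,
      one_mul, hnormPXv _ n ((I n).filter (fun k => k ∉ U))
        (by intro k
            simp only [Finset.mem_filter, Set.mem_diff, Finset.mem_coe]
            tauto)]
  · intro U hU
    have hsplit : ∀ n, (((I n).filter (· ∉ U)).card : ℝ) / (I n).card
        = 1 - (((I n).filter (· ∈ U)).card : ℝ) / (I n).card := by
      intro n
      have hc : ((I n).filter (· ∈ U)).card + ((I n).filter (· ∉ U)).card = (I n).card :=
        Finset.card_filter_add_card_filter_not (p := (· ∈ U))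
      have hc' : (((I n).filter (· ∈ U)).card : ℝ) + (((I n).filter (· ∉ U)).card : ℝ)
          = ((I n).card : ℝ) := by exact_mod_cast congrArg (Nat.cast : ℕ → ℝ) hc
      have hcpos := hcard n
      rw [eq_sub_iff_add_eq, ← add_div, add_comm, hc', div_self (ne_of_gt hcpos)]
    have htail : Tendsto (fun n => (((I n).filter (· ∉ U)).card : ℝ) / (I n).card)
        atTop (nhds 0) := by
      have h0 := Tendsto.sub
        (tendsto_const_nhds : Tendsto (fun _ : ℕ => (1:ℝ)) atTop (nhds 1)) hU
      simp only [sub_self] at h0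
      exact h0.congr fun n => (hsplit n).symm
    set t : ℕ → Finset ℕ := fun N => ((Finset.range N).biUnion I).filter (fun k => k ∈ Uᶜ)
      with htdef
    set A : ℕ → H →L[ℂ] H := fun N => PX (↑(t N) : Set ℕ) ∘L P with hAdef
    have hA : ∀ N, IsCompactOperator ⇑(A N) := by
      intro N
      have hfin : ∀ s : Finset ℕ, IsCompactOperator
          ⇑(∑ k ∈ s, (innerSL ℂ (e k)).smulRight (e k) : H →L[ℂ] H) := by
        intro s
        induction s using Finset.induction_on with
        | empty => simpa using (isCompactOperator_zero : IsCompactOperator (0 : H → H))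
        | @insert a s hmem ih =>
            rw [Finset.sum_insert hmem]
            have h1 := (aux_rank_one_compact (innerSL ℂ (e a)) (e a)).add ih
            simpa [ContinuousLinearMap.coe_add', ContinuousLinearMap.coe_sum'] using h1
      have heq : PX (↑(t N) : Set ℕ) = ∑ k ∈ t N, (innerSL ℂ (e k)).smulRight (e k) := by
        apply hext
        intro j
        rw [ContinuousLinearMap.sum_apply]
        by_cases hj : j ∈ t N
        · rw [(hPX _ j).1 (Finset.mem_coe.mpr hj),
            Finset.sum_eq_single_of_mem j hj (fun k hk hkj => by simp [heit, hkj])]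
          simp [heit, e.orthonormal.1 j]
        · rw [(hPX _ j).2 (fun h => hj (Finset.mem_coe.mp h))]
          symm
          apply Finset.sum_eq_zero
          intro k hk
          have hkj : k ≠ j := fun h => hj (h ▸ hk)
          simp [heit, hkj]
      show IsCompactOperator ⇑(PX (↑(t N) : Set ℕ) ∘L P)
      rw [heq]
      exact (hfin (t N)).comp_clm P
    have hbound : ∀ (Y : Set ℕ) (ε : ℝ), 0 ≤ ε → (∀ m, ‖PX Y (v m)‖ ≤ ε) →
        ‖PX Y ∘L P‖ ≤ ε := by
      intro Y ε hε hb
      refine ContinuousLinearMap.opNorm_le_bound _ hε fun x => ?_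
      have hclosed : IsClosed {y : H | ‖PX Y y‖ ≤ ε * ‖y‖} :=
        isClosed_le (continuous_norm.comp (PX Y).continuous)
          (continuous_const.mul continuous_norm)
      have hspan : (↑(Submodule.span ℂ (Set.range v)) : Set H)
          ⊆ {y : H | ‖PX Y y‖ ≤ ε * ‖y‖} := by
        intro y hy
        obtain ⟨l, rfl⟩ := Finsupp.mem_span_range_iff_exists_finsupp.mp hy
        have hy1 : (l.sum fun i a => a • v i) = ∑ i ∈ l.support, l i • v i := rfl
        simp only [Set.mem_setOf_eq]
        rw [hy1, map_sum]
        simp only [map_smul]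
        have h1 : ‖∑ i ∈ l.support, l i • PX Y (v i)‖ ^ 2
            = ∑ i ∈ l.support, ‖l i • PX Y (v i)‖ ^ 2 := by
          apply aux_norm_sum_sq
          intro m hm n' hn hmn
          rw [inner_smul_left, inner_smul_right, horth Y m n' hmn]
          ring
        have h2 : ‖∑ i ∈ l.support, l i • v i‖ ^ 2 = ∑ i ∈ l.support, ‖l i‖ ^ 2 := by
          rw [aux_norm_sum_sq]
          · exact Finset.sum_congr rfl fun i _ => by rw [norm_smul, hvnorm, mul_one]
          · intro m hm n' hn hmn
            rw [inner_smul_left, inner_smul_right, hv_inner, if_neg hmn]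
            ring
        have h3 : ∑ i ∈ l.support, ‖l i • PX Y (v i)‖ ^ 2
            ≤ ε ^ 2 * ∑ i ∈ l.support, ‖l i‖ ^ 2 := by
          rw [Finset.mul_sum]
          refine Finset.sum_le_sum fun i _ => ?_
          rw [norm_smul, mul_pow]
          calc ‖l i‖ ^ 2 * ‖PX Y (v i)‖ ^ 2 ≤ ‖l i‖ ^ 2 * ε ^ 2 := by
                have h5 := pow_le_pow_left₀ (norm_nonneg _) (hb i) 2
                exact mul_le_mul_of_nonneg_left h5 (by positivity)
            _ = ε ^ 2 * ‖l i‖ ^ 2 := by ring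
        have h4 : ‖∑ i ∈ l.support, l i • PX Y (v i)‖ ^ 2
            ≤ (ε * ‖∑ i ∈ l.support, l i • v i‖) ^ 2 := by
          rw [mul_pow, h2, h1]; exact h3
        nlinarith [norm_nonneg (∑ i ∈ l.support, l i • PX Y (v i)),
          mul_nonneg hε (norm_nonneg (∑ i ∈ l.support, l i • v i))]
      have hPx : P x ∈ closure (↑(Submodule.span ℂ (Set.range v)) : Set H) := hPrange x
      calc ‖(PX Y ∘L P) x‖ = ‖PX Y (P x)‖ := rfl
        _ ≤ ε * ‖P x‖ := closure_minimal hspan hclosed hPx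
        _ ≤ ε * ‖x‖ := mul_le_mul_of_nonneg_left (hPnorm x) hε
    have hdecomp : ∀ N, PX Uᶜ = PX (↑(t N) : Set ℕ) + PX (Uᶜ \ ↑(t N)) := by
      intro N
      apply hext
      intro k
      rw [ContinuousLinearMap.add_apply]
      have htU : ∀ j, j ∈ t N → j ∈ Uᶜ := fun j hj => (Finset.mem_filter.mp hj).2
      by_cases hk : k ∈ Uᶜ
      · rw [(hPX Uᶜ k).1 hk]
        by_cases hk2 : k ∈ t N
        · have hmem1 : k ∈ (↑(t N) : Set ℕ) := Finset.mem_coe.mpr hk2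
          have hmem2 : k ∉ Uᶜ \ (↑(t N) : Set ℕ) := fun h => h.2 hmem1
          rw [(hPX (↑(t N) : Set ℕ) k).1 hmem1, (hPX (Uᶜ \ (↑(t N) : Set ℕ)) k).2 hmem2,
            add_zero]
        · have hmem1 : k ∉ (↑(t N) : Set ℕ) := fun h => hk2 (Finset.mem_coe.mp h)
          have hmem2 : k ∈ Uᶜ \ (↑(t N) : Set ℕ) := ⟨hk, hmem1⟩
          rw [(hPX (↑(t N) : Set ℕ) k).2 hmem1, (hPX (Uᶜ \ (↑(t N) : Set ℕ)) k).1 hmem2,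
            zero_add]
      · have hmem1 : k ∉ (↑(t N) : Set ℕ) := fun h => hk (htU k (Finset.mem_coe.mp h))
        have hmem2 : k ∉ Uᶜ \ (↑(t N) : Set ℕ) := fun h => hk h.1
        rw [(hPX Uᶜ k).2 hk, (hPX (↑(t N) : Set ℕ) k).2 hmem1,
          (hPX (Uᶜ \ (↑(t N) : Set ℕ)) k).2 hmem2, add_zero]
    have hconv : Tendsto A atTop (nhds (PX Uᶜ ∘L P)) := by
      rw [Metric.tendsto_atTop]
      intro ε hε
      have h2 : (0:ℝ) < (ε/2)^2 := by positivity
      obtain ⟨N₀, hN₀⟩ := Metric.tendsto_atTop.mp htail _ h2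
      refine ⟨N₀, fun N hN => ?_⟩
      rw [dist_eq_norm]
      have hAT : A N - PX Uᶜ ∘L P = -(PX (Uᶜ \ ↑(t N)) ∘L P) := by
        rw [hAdef]
        simp only
        rw [hdecomp N, ContinuousLinearMap.add_comp]
        abel
      rw [hAT, norm_neg]
      have hb : ∀ m, ‖PX (Uᶜ \ (↑(t N) : Set ℕ)) (v m)‖ ≤ ε/2 := by
        intro m
        by_cases hm : m < N
        · have hz : PX (Uᶜ \ (↑(t N) : Set ℕ)) (v m) = 0 := by
            apply hPXv0
            intro k hk hkY
            exact (fun h => hkY.2 (Finset.mem_coe.mpr h))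
              (Finset.mem_filter.mpr
                ⟨Finset.mem_biUnion.mpr ⟨m, Finset.mem_range.mpr hm, hk⟩, hkY.1⟩)
          rw [hz, norm_zero]
          positivity
        · push_neg at hm
          have hmN : N₀ ≤ m := le_trans hN hm
          have hsq : ‖PX (Uᶜ \ (↑(t N) : Set ℕ)) (v m)‖ ^ 2
              ≤ (((I m).filter (· ∉ U)).card : ℝ) / (I m).card := by
            rw [hnormPXv _ m ((I m).filter (fun k => k ∈ Uᶜ \ (↑(t N) : Set ℕ)))
              (by intro k; simp [Finset.mem_filter])]
            have hsub : (I m).filter (fun k => k ∈ Uᶜ \ (↑(t N) : Set ℕ))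
                ⊆ (I m).filter (· ∉ U) := by
              intro k hk
              rw [Finset.mem_filter] at hk ⊢
              exact ⟨hk.1, hk.2.1⟩
            have hle : ((Finset.filter (fun k => k ∈ Uᶜ \ (↑(t N) : Set ℕ)) (I m)).card : ℝ)
                ≤ (((I m).filter (· ∉ U)).card : ℝ) := Nat.cast_le.mpr (Finset.card_le_card hsub)
            exact (div_le_div_iff_of_pos_right (hcard m)).mpr hle
          have hlt : (((I m).filter (· ∉ U)).card : ℝ) / (I m).card < (ε/2)^2 := by
            have h6 := hN₀ m hmN
            rw [Real.dist_eq, sub_zero] at h6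
            exact lt_of_le_of_lt (le_abs_self _) h6
          nlinarith [norm_nonneg (PX (Uᶜ \ (↑(t N) : Set ℕ)) (v m))]
      have h7 := hbound _ (ε/2) (by positivity) hb
      linarith
    exact isCompactOperator_of_tendsto hconv (Eventually.of_forall hA)
end
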